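/- Let Λ₀ ⊆ C̄ be a countable set of states such that λ ∈ Λ₀, s ∈ S and λ + s ∈ C̄ imply λ + s ∈ Λ₀, and fix λ₀ ∈ Λ₀. Assume there exist positive reals κ₁, κ₂ and a function V : Λ₀ → ℝ_{>0} such that for every λ ∈ Λ₀, ψ_n(λ) · n^{κ₂} → κ₁ V(λ) as n → ∞. Then: (a) for every λ ∈ Λ₀ the sequence h_n(λ) = ψ_n(λ)/ψ_n(λ₀) converges to h(λ) := V(λ)/V(λ₀); and (b) the limit h is harmonic for the kernel killed outside C̄, i.e. for every λ ∈ Λ₀, h(λ) = ∑_{s ∈ S, λ+s ∈ C̄} ν({s}) · h(λ + s). -/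

import Mathlib

open MeasureTheory ProbabilityTheory Filter
open scoped Classical

noncomputable def auxF {D : ℕ} (ν : Measure (Fin D → ℝ)) (S : Finset (Fin D → ℝ))
    (C : Set (Fin D → ℝ)) : ℕ → (Fin D → ℝ) → ENNReal
  | 0, _ => 1
  | (n+1), lam => ∑ s ∈ S, ν {s} * (if lam + s ∈ C then auxF ν S C n (lam + s) else 0)

lemma aux_main {D : ℕ} (S : Finset (Fin D → ℝ))
    (ν : Measure (Fin D → ℝ)) [IsProbabilityMeasure ν]
    (hνS : ν (S : Set (Fin D → ℝ)) = 1)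
    {Ω : Type*} [mΩ : MeasurableSpace Ω] (P : Measure Ω) [IsProbabilityMeasure P]
    (X : ℕ → Ω → (Fin D → ℝ)) (hXmeas : ∀ k, Measurable (X k))
    (hXindep : iIndepFun X P)
    (hXdist : ∀ k, Measure.map (X k) P = ν)
    (C : Set (Fin D → ℝ)) :
    ∀ (n m : ℕ) (lam : Fin D → ℝ),
      MeasurableSet[⨆ i ∈ Set.Ico m (m+n), MeasurableSpace.comap (X i) inferInstance]
        ({ω | ∀ k, 1 ≤ k → k ≤ n → lam + (∑ j ∈ Finset.range k, X (m+j) ω) ∈ C}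
          ∩ {ω | ∀ j < n, X (m+j) ω ∈ S})
      ∧ P {ω | ∀ k, 1 ≤ k → k ≤ n → lam + (∑ j ∈ Finset.range k, X (m+j) ω) ∈ C}
          = auxF ν S C n lam := by
  -- preliminaries
  have hle : ∀ n m : ℕ,
      (⨆ i ∈ Set.Ico m (m+n), MeasurableSpace.comap (X i) inferInstance) ≤ mΩ :=
    fun n m => iSup₂_le fun i _ => (hXmeas i).comap_le
  have hGnull : ∀ m n : ℕ, P ({ω | ∀ j < n, X (m+j) ω ∈ S}ᶜ) = 0 := by
    intro m n
    have hsub : {ω | ∀ j < n, X (m+j) ω ∈ S}ᶜ ⊆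
        ⋃ j ∈ Finset.range n, (X (m+j)) ⁻¹' (↑S)ᶜ := by
      intro ω hω
      simp only [Set.mem_compl_iff, Set.mem_setOf_eq, not_forall] at hω
      obtain ⟨j, hj, hjS⟩ := hω
      exact Set.mem_biUnion (Finset.mem_range.mpr hj) hjS
    refine measure_mono_null hsub (measure_biUnion_null_iff (Finset.range n).countable_toSet |>.mpr ?_)
    intro j _
    have : P ((X (m+j)) ⁻¹' (↑S)ᶜ) = ν ((↑S : Set (Fin D → ℝ))ᶜ) := by
      rw [← hXdist (m+j), Measure.map_apply (hXmeas (m+j)) S.measurableSet.compl]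
    rw [this, prob_compl_eq_zero_iff S.measurableSet]
    exact hνS
  have hEG : ∀ (m n : ℕ) (A : Set Ω),
      P A = P (A ∩ {ω | ∀ j < n, X (m+j) ω ∈ S}) := by
    intro m n A
    refine le_antisymm ?_ (measure_mono Set.inter_subset_left)
    calc P A ≤ P ((A ∩ {ω | ∀ j < n, X (m+j) ω ∈ S}) ∪ {ω | ∀ j < n, X (m+j) ω ∈ S}ᶜ) := by
          refine measure_mono ?_
          intro ω hω
          by_cases h : ω ∈ {ω | ∀ j < n, X (m+j) ω ∈ S}
          · exact Or.inl ⟨hω, h⟩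
          · exact Or.inr h
      _ ≤ P (A ∩ {ω | ∀ j < n, X (m+j) ω ∈ S}) + P ({ω | ∀ j < n, X (m+j) ω ∈ S}ᶜ) :=
          measure_union_le _ _
      _ = P (A ∩ {ω | ∀ j < n, X (m+j) ω ∈ S}) := by rw [hGnull m n, add_zero]
  intro n
  induction n with
  | zero =>
    intro m lam
    have hE : {ω : Ω | ∀ k, 1 ≤ k → k ≤ 0 → lam + (∑ j ∈ Finset.range k, X (m+j) ω) ∈ C}
        = Set.univ := by
      ext ω; simp only [Set.mem_setOf_eq, Set.mem_univ, iff_true]; intro k h1 h2; omega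
    have hG : {ω : Ω | ∀ j < 0, X (m+j) ω ∈ S} = Set.univ := by
      ext ω; simp
    rw [hE, hG]
    exact ⟨by simpa using MeasurableSet.univ, by simp [auxF]⟩
  | succ n ih =>
    intro m lam
    have hsum : ∀ (ω : Ω) (k : ℕ), ∑ j ∈ Finset.range (k+1), X (m+j) ω
        = X m ω + ∑ j ∈ Finset.range k, X (m+1+j) ω := by
      intro ω k
      rw [Finset.sum_range_succ' (fun j => X (m+j) ω) k, add_comm]
      congr 1
      exact Finset.sum_congr rfl fun j _ => by rw [show m+(j+1) = m+1+j by omega]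
    have hsplit :
        ({ω | ∀ k, 1 ≤ k → k ≤ n+1 → lam + (∑ j ∈ Finset.range k, X (m+j) ω) ∈ C}
          ∩ {ω | ∀ j < n+1, X (m+j) ω ∈ S})
        = ⋃ s ∈ S, (if lam + s ∈ C then
            ((X m) ⁻¹' {s} ∩
              ({ω | ∀ k, 1 ≤ k → k ≤ n → (lam+s) + (∑ j ∈ Finset.range k, X (m+1+j) ω) ∈ C}
                ∩ {ω | ∀ j < n, X (m+1+j) ω ∈ S})) else ∅) := by
      ext ω
      simp only [Set.mem_inter_iff, Set.mem_setOf_eq, Set.mem_iUnion, Set.mem_preimage,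
        Set.mem_singleton_iff, exists_prop]
      constructor
      · rintro ⟨hE, hG⟩
        have hs0 : X m ω ∈ S := by simpa using hG 0 (Nat.succ_pos n)
        refine ⟨X m ω, hs0, ?_⟩
        have hC1 : lam + X m ω ∈ C := by
          have := hE 1 le_rfl (by omega)
          simpa using this
        rw [if_pos hC1]
        refine ⟨rfl, ?_, ?_⟩
        · intro k hk1 hkn
          have := hE (k+1) (by omega) (by omega)
          rw [hsum ω k, ← add_assoc] at this
          exact this
        · intro j hj
          have := hG (j+1) (by omega)
          rw [show m+1+j = m+(j+1) by omega]
          exact this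
      · rintro ⟨s, hs, hmem⟩
        by_cases hC : lam + s ∈ C
        · rw [if_pos hC] at hmem
          obtain ⟨hXms, hE', hG'⟩ := hmem
          constructor
          · intro k hk1 hkn
            obtain ⟨k', rfl⟩ : ∃ k', k = k'+1 := ⟨k-1, by omega⟩
            rw [hsum ω k', hXms, ← add_assoc]
            rcases Nat.eq_zero_or_pos k' with h0 | hpos
            · subst h0; simpa using hC
            · exact hE' k' hpos (by omega)
          · intro j hj
            rcases Nat.eq_zero_or_pos j with h0 | hpos
            · subst h0; exact hXms.symm ▸ hs
            · obtain ⟨j', rfl⟩ : ∃ j', j = j'+1 := ⟨j-1, by omega⟩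
              rw [show m+(j'+1) = m+1+j' by omega]
              exact hG' j' (by omega)
        · rw [if_neg hC] at hmem
          exact absurd hmem (Set.notMem_empty ω)
    -- measurability of the pieces
    have hpiece_sup : ∀ s ∈ S,
        MeasurableSet[⨆ i ∈ Set.Ico m (m+(n+1)), MeasurableSpace.comap (X i) inferInstance]
          (if lam + s ∈ C then
            ((X m) ⁻¹' {s} ∩
              ({ω | ∀ k, 1 ≤ k → k ≤ n → (lam+s) + (∑ j ∈ Finset.range k, X (m+1+j) ω) ∈ C}
                ∩ {ω | ∀ j < n, X (m+1+j) ω ∈ S})) else ∅) := by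
      intro s _
      split_ifs with hC
      · have h1 : MeasurableSpace.comap (X m) inferInstance ≤
            ⨆ i ∈ Set.Ico m (m+(n+1)), MeasurableSpace.comap (X i) inferInstance :=
          le_iSup₂ (f := fun i (_ : i ∈ Set.Ico m (m+(n+1))) =>
            MeasurableSpace.comap (X i) inferInstance) m ⟨le_rfl, by omega⟩
        have hset1 : MeasurableSet[MeasurableSpace.comap (X m) inferInstance]
            ((X m) ⁻¹' {s}) := ⟨{s}, measurableSet_singleton s, rfl⟩
        have hA : MeasurableSet[⨆ i ∈ Set.Ico m (m+(n+1)),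
            MeasurableSpace.comap (X i) inferInstance] ((X m) ⁻¹' {s}) := h1 _ hset1
        have h2 : (⨆ i ∈ Set.Ico (m+1) (m+1+n), MeasurableSpace.comap (X i) inferInstance)
            ≤ ⨆ i ∈ Set.Ico m (m+(n+1)), MeasurableSpace.comap (X i) inferInstance := by
          refine biSup_mono ?_
          intro i hi
          simp only [Set.mem_Ico] at hi ⊢
          omega
        have hB : MeasurableSet[⨆ i ∈ Set.Ico m (m+(n+1)),
            MeasurableSpace.comap (X i) inferInstance]
            ({ω | ∀ k, 1 ≤ k → k ≤ n → (lam+s) + (∑ j ∈ Finset.range k, X (m+1+j) ω) ∈ C}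
              ∩ {ω | ∀ j < n, X (m+1+j) ω ∈ S}) := h2 _ (ih (m+1) (lam+s)).1
        exact hA.inter hB
      · exact @MeasurableSet.empty _
          (⨆ i ∈ Set.Ico m (m+(n+1)), MeasurableSpace.comap (X i) inferInstance)
    have hpiece_amb : ∀ s ∈ S,
        MeasurableSet (if lam + s ∈ C then
            ((X m) ⁻¹' {s} ∩
              ({ω | ∀ k, 1 ≤ k → k ≤ n → (lam+s) + (∑ j ∈ Finset.range k, X (m+1+j) ω) ∈ C}
                ∩ {ω | ∀ j < n, X (m+1+j) ω ∈ S})) else ∅) :=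
      fun s hs => hle (n+1) m _ (hpiece_sup s hs)
    constructor
    · rw [hsplit]
      exact MeasurableSet.biUnion S.countable_toSet hpiece_sup
    · -- independence
      have hIndep : Indep (MeasurableSpace.comap (X m) inferInstance)
          (⨆ i ∈ Set.Ico (m+1) (m+1+n), MeasurableSpace.comap (X i) inferInstance) P := by
        have hdisj : Disjoint ({m} : Set ℕ) (Set.Ico (m+1) (m+1+n)) := by
          rw [Set.disjoint_left]
          rintro a rfl ha
          simp only [Set.mem_Ico] at ha
          omega
        have h := indep_iSup_of_disjoint (fun i => (hXmeas i).comap_le) hXindep.iIndep hdisj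
        simpa using h
      have hmeasure : P ({ω | ∀ k, 1 ≤ k → k ≤ n+1 → lam + (∑ j ∈ Finset.range k, X (m+j) ω) ∈ C})
          = ∑ s ∈ S, P (if lam + s ∈ C then
            ((X m) ⁻¹' {s} ∩
              ({ω | ∀ k, 1 ≤ k → k ≤ n → (lam+s) + (∑ j ∈ Finset.range k, X (m+1+j) ω) ∈ C}
                ∩ {ω | ∀ j < n, X (m+1+j) ω ∈ S})) else ∅) := by
        rw [hEG m (n+1) _, hsplit]
        refine measure_biUnion_finset ?_ hpiece_amb
        intro s hs t ht hst
        simp only [Function.onFun]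
        split_ifs with h1 h2 h2
        · refine Disjoint.mono Set.inter_subset_left Set.inter_subset_left ?_
          exact Disjoint.preimage (X m) (Set.disjoint_singleton.mpr hst)
        · exact disjoint_bot_right
        · exact disjoint_bot_left
        · exact disjoint_bot_left
      rw [hmeasure]
      show _ = auxF ν S C (n+1) lam
      rw [show auxF ν S C (n+1) lam
          = ∑ s ∈ S, ν {s} * (if lam + s ∈ C then auxF ν S C n (lam + s) else 0) from rfl]
      refine Finset.sum_congr rfl fun s hs => ?_
      split_ifs with hC
      · have hset1 : MeasurableSet[MeasurableSpace.comap (X m) inferInstance] ((X m) ⁻¹' {s}) :=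
          ⟨{s}, measurableSet_singleton s, rfl⟩
        have := (Indep_iff _ _ _).mp hIndep _ _ hset1 (ih (m+1) (lam+s)).1
        rw [this]
        congr 1
        · rw [← hXdist m, Measure.map_apply (hXmeas m) (measurableSet_singleton s)]
        · rw [← hEG (m+1) n _, (ih (m+1) (lam+s)).2]
      · simp

/-- if `ψ_n(λ)·n^{κ₂} → κ₁ V(λ)` for all `λ` in a countable set of states
`Λ₀ ⊆ C̄` closed under the admissible steps, then (a) `h_n(λ) = ψ_n(λ)/ψ_n(λ₀)` converges
to `h(λ) = V(λ)/V(λ₀)`, and (b) the limit `h` is harmonic for the kernel killed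
outside `C̄`. Here `ψ_n(λ) = ℙ(λ + S(k) ∈ C̄ for 1 ≤ k ≤ n)`. -/
theorem stmt_8
    (D : ℕ) (hD : 1 ≤ D)
    (S : Finset (Fin D → ℝ)) (hSne : S.Nonempty)
    (ν : Measure (Fin D → ℝ)) [IsProbabilityMeasure ν]
    (hνpos : ∀ s ∈ S, 0 < ν {s}) (hνS : ν (S : Set (Fin D → ℝ)) = 1)
    {Ω : Type*} [MeasurableSpace Ω] (P : Measure Ω) [IsProbabilityMeasure P]
    (X : ℕ → Ω → (Fin D → ℝ)) (hXmeas : ∀ k, Measurable (X k))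
    (hXindep : iIndepFun X P)
    (hXdist : ∀ k, Measure.map (X k) P = ν)
    (C : Set (Fin D → ℝ)) (hCadd : ∀ x ∈ C, ∀ y ∈ C, x + y ∈ C)
    (Λ₀ : Set (Fin D → ℝ)) (hΛ₀sub : Λ₀ ⊆ C) (hΛ₀count : Λ₀.Countable)
    (hΛ₀closed : ∀ lam ∈ Λ₀, ∀ s ∈ S, lam + s ∈ C → lam + s ∈ Λ₀)
    (lam₀ : Fin D → ℝ) (hlam₀ : lam₀ ∈ Λ₀)
    (κ₁ κ₂ : ℝ) (hκ₁ : 0 < κ₁) (hκ₂ : 0 < κ₂)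
    (V : (Fin D → ℝ) → ℝ) (hV : ∀ lam ∈ Λ₀, 0 < V lam)
    (hasymp : ∀ lam ∈ Λ₀, Tendsto (fun n : ℕ =>
        (P {ω | ∀ k, 1 ≤ k → k ≤ n →
            lam + (∑ j ∈ Finset.range k, X j ω) ∈ C}).toReal * (n : ℝ) ^ κ₂)
        atTop (nhds (κ₁ * V lam))) :
    (∀ lam ∈ Λ₀, Tendsto (fun n : ℕ =>
        (P {ω | ∀ k, 1 ≤ k → k ≤ n →
            lam + (∑ j ∈ Finset.range k, X j ω) ∈ C}).toReal
          / (P {ω | ∀ k, 1 ≤ k → k ≤ n →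
              lam₀ + (∑ j ∈ Finset.range k, X j ω) ∈ C}).toReal)
        atTop (nhds (V lam / V lam₀)))
    ∧ ∀ lam ∈ Λ₀, V lam / V lam₀
        = ∑ s ∈ S, (ν {s}).toReal * C.indicator (fun μ => V μ / V lam₀) (lam + s) := by
  -- ψ expressed through auxF
  have hψ : ∀ (n : ℕ) (lam : Fin D → ℝ),
      P {ω | ∀ k, 1 ≤ k → k ≤ n → lam + (∑ j ∈ Finset.range k, X j ω) ∈ C}
        = auxF ν S C n lam := by
    intro n lam
    have h := (aux_main S ν hνS P X hXmeas hXindep hXdist C n 0 lam).2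
    simpa using h
  have hne : ∀ (n : ℕ) (lam : Fin D → ℝ), auxF ν S C n lam ≠ ⊤ := by
    intro n lam
    rw [← hψ]
    exact measure_ne_top P _
  -- recursion for toReal values
  have hrec : ∀ (n : ℕ) (lam : Fin D → ℝ), (auxF ν S C (n+1) lam).toReal
      = ∑ s ∈ S, (ν {s}).toReal * (if lam + s ∈ C then (auxF ν S C n (lam+s)).toReal else 0) := by
    intro n lam
    rw [show auxF ν S C (n+1) lam
        = ∑ s ∈ S, ν {s} * (if lam + s ∈ C then auxF ν S C n (lam + s) else 0) from rfl]
    rw [ENNReal.toReal_sum]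
    · refine Finset.sum_congr rfl fun s hs => ?_
      rw [ENNReal.toReal_mul]
      split_ifs with h <;> simp
    · intro s hs
      refine ENNReal.mul_ne_top (measure_ne_top ν _) ?_
      split_ifs with h
      · exact hne n (lam+s)
      · exact ENNReal.zero_ne_top
  constructor
  · -- part (a)
    intro lam hlam
    have h1 := hasymp lam hlam
    have h0 := hasymp lam₀ hlam₀
    have hV₀ : (0:ℝ) < κ₁ * V lam₀ := mul_pos hκ₁ (hV lam₀ hlam₀)
    have hlim := h1.div h0 (ne_of_gt hV₀)
    have heq : ∀ᶠ n : ℕ in atTop,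
        ((P {ω | ∀ k, 1 ≤ k → k ≤ n → lam + (∑ j ∈ Finset.range k, X j ω) ∈ C}).toReal * (n:ℝ)^κ₂)
          / ((P {ω | ∀ k, 1 ≤ k → k ≤ n → lam₀ + (∑ j ∈ Finset.range k, X j ω) ∈ C}).toReal * (n:ℝ)^κ₂)
        = (P {ω | ∀ k, 1 ≤ k → k ≤ n → lam + (∑ j ∈ Finset.range k, X j ω) ∈ C}).toReal
          / (P {ω | ∀ k, 1 ≤ k → k ≤ n → lam₀ + (∑ j ∈ Finset.range k, X j ω) ∈ C}).toReal := by
      filter_upwards [eventually_ge_atTop 1] with n hn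
      have hnpos : (0:ℝ) < n := by exact_mod_cast hn
      exact mul_div_mul_right _ _ (ne_of_gt (Real.rpow_pos_of_pos hnpos κ₂))
    have := hlim.congr' heq
    rwa [mul_div_mul_left _ _ (ne_of_gt hκ₁)] at this
  · -- part (b)
    intro lam hlam
    -- limit of LHS along n+1 with weight n^κ₂
    have hAll : Tendsto (fun n : ℕ => (auxF ν S C (n+1) lam).toReal * (n:ℝ)^κ₂)
        atTop (nhds (κ₁ * V lam)) := by
      have h1 : Tendsto (fun n : ℕ => (auxF ν S C (n+1) lam).toReal * ((n:ℝ)+1)^κ₂)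
          atTop (nhds (κ₁ * V lam)) := by
        have := (hasymp lam hlam).comp (tendsto_add_atTop_nat 1)
        refine this.congr fun n => ?_
        simp only [Function.comp_apply]
        rw [hψ]
        push_cast
        ring
      have h2 : Tendsto (fun n : ℕ => ((n:ℝ)/((n:ℝ)+1))^κ₂) atTop (nhds 1) := by
        have hbase : Tendsto (fun n : ℕ => (n:ℝ)/((n:ℝ)+1)) atTop (nhds 1) := by
          exact tendsto_natCast_div_add_atTop (1:ℝ)
        have hc : ContinuousAt (fun x : ℝ => x ^ κ₂) 1 :=
          Real.continuousAt_rpow_const 1 κ₂ (Or.inl one_ne_zero)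
        have := hc.tendsto.comp hbase
        rwa [Real.one_rpow] at this
      have := h1.mul h2
      rw [mul_one] at this
      refine this.congr fun n => ?_
      have hn0 : (0:ℝ) ≤ (n:ℝ) := Nat.cast_nonneg n
      have hn1 : (0:ℝ) < (n:ℝ)+1 := by positivity
      rw [Real.div_rpow hn0 (le_of_lt hn1)]
      field_simp
    -- limit of RHS
    have hsum : Tendsto (fun n : ℕ => (auxF ν S C (n+1) lam).toReal * (n:ℝ)^κ₂)
        atTop (nhds (∑ s ∈ S, (ν {s}).toReal * (if lam + s ∈ C then κ₁ * V (lam+s) else 0))) := by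
      have hexp : ∀ n : ℕ, (auxF ν S C (n+1) lam).toReal * (n:ℝ)^κ₂
          = ∑ s ∈ S, (ν {s}).toReal *
              (if lam + s ∈ C then (auxF ν S C n (lam+s)).toReal * (n:ℝ)^κ₂ else 0) := by
        intro n
        rw [hrec n lam, Finset.sum_mul]
        refine Finset.sum_congr rfl fun s hs => ?_
        split_ifs with h <;> ring
      refine Tendsto.congr (fun n => (hexp n).symm) ?_
      refine tendsto_finset_sum _ fun s hs => ?_
      by_cases hC : lam + s ∈ C
      · simp only [if_pos hC]
        refine tendsto_const_nhds.mul ?_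
        have := hasymp (lam+s) (hΛ₀closed lam hlam s hs hC)
        refine this.congr fun n => ?_
        rw [hψ]
      · simp only [if_neg hC, mul_zero]
        exact tendsto_const_nhds
    have huniq : κ₁ * V lam
        = ∑ s ∈ S, (ν {s}).toReal * (if lam + s ∈ C then κ₁ * V (lam+s) else 0) :=
      tendsto_nhds_unique hAll hsum
    have hstep : V lam / V lam₀ = (κ₁ * V lam) / (κ₁ * V lam₀) := by
      rw [mul_div_mul_left _ _ (ne_of_gt hκ₁)]
    rw [hstep, huniq, Finset.sum_div]
    refine Finset.sum_congr rfl fun s hs => ?_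
    rw [Set.indicator_apply]
    split_ifs with h
    · rw [mul_div_assoc, mul_div_mul_left _ _ (ne_of_gt hκ₁)]
    · simp
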